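/- Let γ₁, γ₂ ∈ ρ_NED(A) with γ₁ < γ₂ and set F(l) = U_{γ₁}(l) ∩ S_{γ₂}(l) for l ∈ ℤ. Then the following are equivalent: (A') F(l) ≠ {0} for some l ∈ ℤ; (B') there exists ζ ∈ (γ₁, γ₂) ∩ Σ_NED(A); (C') dim S_{γ₁}(l) < dim S_{γ₂}(l) for all l; (D') dim U_{γ₁}(l) > dim U_{γ₂}(l) for all l. -/

import Mathlib

open Matrix

attribute [local instance] Matrix.linftyOpNormedAddCommGroup

abbrev Mat (N : ℕ) := Matrix (Fin N) (Fin N) ℝ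

noncomputable def fundSolNat {N : ℕ} (A : ℤ → GL (Fin N) ℝ) : ℕ → GL (Fin N) ℝ
  | 0 => 1
  | n + 1 => A (n : ℤ) * fundSolNat A n

noncomputable def fundSolNeg {N : ℕ} (A : ℤ → GL (Fin N) ℝ) : ℕ → GL (Fin N) ℝ
  | 0 => (A (-1))⁻¹
  | n + 1 => (A (Int.negSucc (n + 1)))⁻¹ * fundSolNeg A n

noncomputable def fundSol {N : ℕ} (A : ℤ → GL (Fin N) ℝ) : ℤ → GL (Fin N) ℝ
  | Int.ofNat n => fundSolNat A n
  | Int.negSucc n => fundSolNeg A n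

/-- The evolution operator `Φ(k,l)` of `x_{k+1} = A_k x_k`. -/
noncomputable def evol {N : ℕ} (A : ℤ → GL (Fin N) ℝ) (k l : ℤ) : Mat N :=
  ↑(fundSol A k * (fundSol A l)⁻¹)

def IsInvariantProjector {N : ℕ} (A : ℤ → GL (Fin N) ℝ) (P : ℤ → Mat N) : Prop :=
  (∀ k, P k * P k = P k) ∧ ∀ k, P (k + 1) * (A k : Mat N) = (A k : Mat N) * P k

/-- Evolution operator `Φ_γ(k,l) = γ^{-(k-l)} Φ(k,l)` of `x_{k+1} = (1/γ) A_k x_k`. -/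
noncomputable def evolW {N : ℕ} (A : ℤ → GL (Fin N) ℝ) (γ : ℝ) (k l : ℤ) : Mat N :=
  γ ^ (l - k) • evol A k l

def NEDWith {N : ℕ} (A : ℤ → GL (Fin N) ℝ) (γ : ℝ) (P : ℤ → Mat N) (K α ε : ℝ) : Prop :=
  IsInvariantProjector A P ∧ 1 ≤ K ∧ 0 < α ∧ α < 1 ∧ 1 ≤ ε ∧
    (∀ k l : ℤ, l ≤ k → ‖evolW A γ k l * P l‖ ≤ K * α ^ (k - l) * ε ^ l) ∧
    (∀ k l : ℤ, k ≤ l → ‖evolW A γ k l * (1 - P l)‖ ≤ K * (1 / α) ^ (k - l) * ε ^ l)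

def HasNED {N : ℕ} (A : ℤ → GL (Fin N) ℝ) (γ : ℝ) : Prop :=
  ∃ P K α ε, NEDWith A γ P K α ε

def HasStrongNED {N : ℕ} (A : ℤ → GL (Fin N) ℝ) (γ : ℝ) : Prop :=
  ∃ P K α ε, NEDWith A γ P K α ε ∧ α * ε ^ 2 < 1

def HasED {N : ℕ} (A : ℤ → GL (Fin N) ℝ) (γ : ℝ) : Prop :=
  ∃ P K α, NEDWith A γ P K α 1

def SigmaNED {N : ℕ} (A : ℤ → GL (Fin N) ℝ) : Set ℝ := {γ | 0 < γ ∧ ¬ HasStrongNED A γ}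

def rhoNED {N : ℕ} (A : ℤ → GL (Fin N) ℝ) : Set ℝ := {γ | 0 < γ ∧ HasStrongNED A γ}

def SigmaED {N : ℕ} (A : ℤ → GL (Fin N) ℝ) : Set ℝ := {γ | 0 < γ ∧ ¬ HasED A γ}

def stableSet {N : ℕ} (A : ℤ → GL (Fin N) ℝ) (γ ε : ℝ) (l : ℤ) : Set (Fin N → ℝ) :=
  {ξ | ∃ C : ℝ, ∀ k : ℤ, l ≤ k → ‖(evol A k l).mulVec ξ‖ * γ ^ (-k) * ε ^ (-l) ≤ C}

def unstableSet {N : ℕ} (A : ℤ → GL (Fin N) ℝ) (γ ε : ℝ) (l : ℤ) : Set (Fin N → ℝ) :=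
  {ξ | ∃ C : ℝ, ∀ k : ℤ, k ≤ l → ‖(evol A k l).mulVec ξ‖ * γ ^ (-k) * ε ^ (-l) ≤ C}

lemma fundSol_succ {N : ℕ} (A : ℤ → GL (Fin N) ℝ) (k : ℤ) :
    fundSol A (k + 1) = A k * fundSol A k := by
  cases k with
  | ofNat n => rfl
  | negSucc n =>
    cases n with
    | zero =>
      show fundSol A 0 = _
      show (1 : GL (Fin N) ℝ) = A (-1) * fundSolNeg A 0
      show (1 : GL (Fin N) ℝ) = A (-1) * (A (-1))⁻¹
      rw [mul_inv_cancel]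
    | succ m =>
      show fundSolNeg A m = A (Int.negSucc (m+1)) * fundSolNeg A (m+1)
      show fundSolNeg A m = A (Int.negSucc (m+1)) * ((A (Int.negSucc (m + 1)))⁻¹ * fundSolNeg A m)
      rw [← mul_assoc, mul_inv_cancel, one_mul]

lemma evol_self {N : ℕ} (A : ℤ → GL (Fin N) ℝ) (l : ℤ) : evol A l l = 1 := by
  simp [evol]

lemma evol_mul {N : ℕ} (A : ℤ → GL (Fin N) ℝ) (k m l : ℤ) :
    evol A k m * evol A m l = evol A k l := by
  simp only [evol, ← Units.val_mul]
  congr 1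
  group

lemma evol_succ {N : ℕ} (A : ℤ → GL (Fin N) ℝ) (k l : ℤ) :
    evol A (k + 1) l = (A k : Mat N) * evol A k l := by
  simp only [evol, fundSol_succ, Units.val_mul, mul_assoc]

lemma evol_pred {N : ℕ} (A : ℤ → GL (Fin N) ℝ) (k l : ℤ) :
    evol A k l = (A (k-1) : Mat N) * evol A (k-1) l := by
  rw [← evol_succ, sub_add_cancel]

lemma inv_val_mul {N : ℕ} (u : GL (Fin N) ℝ) : ((u⁻¹ : GL (Fin N) ℝ) : Mat N) * (u : Mat N) = 1 := by
  rw [← Units.val_mul, inv_mul_cancel, Units.val_one]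

lemma val_mul_inv {N : ℕ} (u : GL (Fin N) ℝ) : (u : Mat N) * ((u⁻¹ : GL (Fin N) ℝ) : Mat N) = 1 := by
  rw [← Units.val_mul, mul_inv_cancel, Units.val_one]

lemma invariant_evol_zero {N : ℕ} {A : ℤ → GL (Fin N) ℝ} {P : ℤ → Mat N}
    (hP : IsInvariantProjector A P) (k : ℤ) : P k * evol A k 0 = evol A k 0 * P 0 := by
  induction k using Int.induction_on with
  | zero => rw [evol_self]; simp
  | succ n ih =>
    rw [evol_succ, ← mul_assoc, hP.2, mul_assoc, ih, ← mul_assoc]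
  | pred n ih =>
    have h2 := hP.2 (-(n:ℤ) - 1)
    rw [sub_add_cancel] at h2
    have e1 : evol A (-(n:ℤ)) 0 = (A (-(n:ℤ)-1) : Mat N) * evol A (-(n:ℤ)-1) 0 := evol_pred A _ _
    calc P (-(n:ℤ)-1) * evol A (-(n:ℤ)-1) 0
        = ((A (-(n:ℤ)-1))⁻¹ : GL (Fin N) ℝ) * ((A (-(n:ℤ)-1) : Mat N) * P (-(n:ℤ)-1)) * evol A (-(n:ℤ)-1) 0 := by
          rw [← mul_assoc ((A (-(n:ℤ)-1))⁻¹ : GL (Fin N) ℝ).val, inv_val_mul, one_mul]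
      _ = ((A (-(n:ℤ)-1))⁻¹ : GL (Fin N) ℝ) * (P (-(n:ℤ)) * ((A (-(n:ℤ)-1) : Mat N) * evol A (-(n:ℤ)-1) 0)) := by
          rw [← h2]; simp only [mul_assoc]
      _ = ((A (-(n:ℤ)-1))⁻¹ : GL (Fin N) ℝ) * (P (-(n:ℤ)) * evol A (-(n:ℤ)) 0) := by rw [← e1]
      _ = ((A (-(n:ℤ)-1))⁻¹ : GL (Fin N) ℝ) * ((A (-(n:ℤ)-1) : Mat N) * evol A (-(n:ℤ)-1) 0 * P 0) := by
          rw [ih, e1]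
      _ = evol A (-(n:ℤ)-1) 0 * P 0 := by rw [← mul_assoc, ← mul_assoc, inv_val_mul, one_mul]

lemma invariant_evol {N : ℕ} {A : ℤ → GL (Fin N) ℝ} {P : ℤ → Mat N}
    (hP : IsInvariantProjector A P) (k l : ℤ) : P k * evol A k l = evol A k l * P l := by
  have hl := invariant_evol_zero hP l
  have hk := invariant_evol_zero hP k
  have h0 : P 0 * evol A 0 l = evol A 0 l * P l := by
    have : evol A 0 l * (P l * evol A l 0) * evol A 0 l = evol A 0 l * (evol A l 0 * P 0) * evol A 0 l := by
      rw [hl]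
    calc P 0 * evol A 0 l = evol A 0 l * evol A l 0 * P 0 * evol A 0 l := by
          rw [evol_mul, evol_self, one_mul]
      _ = evol A 0 l * (P l * evol A l 0) * evol A 0 l := by rw [hl]; simp only [mul_assoc]
      _ = evol A 0 l * P l * (evol A l 0 * evol A 0 l) := by simp only [mul_assoc]
      _ = evol A 0 l * P l := by rw [evol_mul, evol_self, mul_one]
  calc P k * evol A k l = P k * evol A k 0 * evol A 0 l := by rw [mul_assoc, evol_mul]
    _ = evol A k 0 * (P 0 * evol A 0 l) := by rw [hk]; simp only [mul_assoc]
    _ = evol A k 0 * evol A 0 l * P l := by rw [h0]; simp only [mul_assoc]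
    _ = evol A k l * P l := by rw [evol_mul]

attribute [local instance] Matrix.linftyOpNormedSpace

lemma zpow_le_zpow_base {x y : ℝ} (hx : 0 ≤ x) (hxy : x ≤ y) {n : ℤ} (hn : 0 ≤ n) :
    x ^ n ≤ y ^ n := by
  lift n to ℕ using hn
  rw [zpow_natCast, zpow_natCast]
  exact pow_le_pow_left₀ hx hxy _

lemma zpow_le_one_base {x : ℝ} (hx : 0 ≤ x) (hx1 : x ≤ 1) {n : ℤ} (hn : 0 ≤ n) :
    x ^ n ≤ 1 := by
  have := zpow_le_zpow_base hx hx1 hn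
  simpa using this

lemma le_zero_of_le_geom {v c α : ℝ} (hα0 : 0 ≤ α) (hα1 : α < 1)
    (h : ∀ n : ℕ, v ≤ c * α ^ n) : v ≤ 0 := by
  have ht : Filter.Tendsto (fun n : ℕ => c * α ^ n) Filter.atTop (nhds 0) := by
    have := (tendsto_pow_atTop_nhds_zero_of_lt_one hα0 hα1).const_mul c
    simpa using this
  exact ge_of_tendsto ht (Filter.Eventually.of_forall h)

lemma evol_mul_smul {N : ℕ} (A : ℤ → GL (Fin N) ℝ) {γ : ℝ} (hγ : γ ≠ 0) (k l : ℤ) :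
    evol A k l = γ ^ (k - l) • evolW A γ k l := by
  rw [evolW, smul_smul, ← zpow_add₀ hγ]
  simp

/-- transfer the weighted evolution between two weights -/
lemma evolW_weight_change {N : ℕ} (A : ℤ → GL (Fin N) ℝ) {γ ζ : ℝ} (hγ : γ ≠ 0) (hζ : ζ ≠ 0)
    (k l : ℤ) : evolW A ζ k l = (γ / ζ) ^ (k - l) • evolW A γ k l := by
  rw [evolW, evolW, smul_smul]
  congr 1
  rw [div_zpow, div_eq_mul_inv]
  rw [← _root_.zpow_neg, neg_sub, mul_right_comm, ← zpow_add₀ hγ]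
  simp

lemma mem_range_iff_fix {N : ℕ} {p : Mat N} (hp : p * p = p) (x : Fin N → ℝ) :
    x ∈ LinearMap.range p.mulVecLin ↔ p *ᵥ x = x := by
  constructor
  · rintro ⟨y, rfl⟩
    rw [Matrix.mulVecLin_apply, Matrix.mulVec_mulVec, hp]
  · intro h; exact ⟨x, h⟩

/-- Forward norm estimate for the unweighted evolution applied to the projector. -/
lemma norm_evol_P {N : ℕ} {A : ℤ → GL (Fin N) ℝ} {γ : ℝ} {P : ℤ → Mat N} {K α : ℝ}
    (hγ : 0 < γ) (hN : NEDWith A γ P K α 1) {k l : ℤ} (hk : l ≤ k) :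
    ‖evol A k l * P l‖ ≤ K * α ^ (k - l) * γ ^ (k - l) := by
  have h := hN.2.2.2.2.2.1 k l hk
  rw [_root_.one_zpow, mul_one] at h
  have : evol A k l * P l = γ ^ (k - l) • (evolW A γ k l * P l) := by
    rw [evol_mul_smul A hγ.ne', Matrix.smul_mul]
  rw [this, norm_smul, Real.norm_eq_abs, abs_of_pos (zpow_pos hγ _)]
  calc γ ^ (k-l) * ‖evolW A γ k l * P l‖ ≤ γ ^ (k-l) * (K * α ^ (k-l)) := by
        exact mul_le_mul_of_nonneg_left h (zpow_pos hγ _).le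
    _ = K * α ^ (k-l) * γ ^ (k-l) := by ring

/-- Backward norm estimate. -/
lemma norm_evol_Q {N : ℕ} {A : ℤ → GL (Fin N) ℝ} {γ : ℝ} {P : ℤ → Mat N} {K α : ℝ}
    (hγ : 0 < γ) (hN : NEDWith A γ P K α 1) {k l : ℤ} (hk : k ≤ l) :
    ‖evol A k l * (1 - P l)‖ ≤ K * α ^ (l - k) * γ ^ (k - l) := by
  have h := hN.2.2.2.2.2.2 k l hk
  rw [_root_.one_zpow, mul_one] at h
  have hα0 := hN.2.2.1
  have : evol A k l * (1 - P l) = γ ^ (k - l) • (evolW A γ k l * (1 - P l)) := by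
    rw [evol_mul_smul A hγ.ne', Matrix.smul_mul]
  rw [this, norm_smul, Real.norm_eq_abs, abs_of_pos (zpow_pos hγ _)]
  have h2 : K * (1/α) ^ (k - l) = K * α ^ (l - k) := by
    rw [one_div, _root_.inv_zpow, ← _root_.zpow_neg, neg_sub]
  calc γ ^ (k-l) * ‖evolW A γ k l * (1 - P l)‖ ≤ γ ^ (k-l) * (K * (1/α) ^ (k-l)) := by
        exact mul_le_mul_of_nonneg_left h (zpow_pos hγ _).le
    _ = K * α ^ (l-k) * γ ^ (k-l) := by rw [h2]; ring

lemma stable_eq_range {N : ℕ} {A : ℤ → GL (Fin N) ℝ} {γ : ℝ} {P : ℤ → Mat N} {K α : ℝ}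
    (hγ : 0 < γ) (hN : NEDWith A γ P K α 1) (l : ℤ) :
    stableSet A γ 1 l = ↑(LinearMap.range (P l).mulVecLin) := by
  obtain ⟨hPinv, hK, hα0, hα1, -, hfwd, hbwd⟩ := hN
  ext ξ
  rw [SetLike.mem_coe, mem_range_iff_fix (hPinv.1 l)]
  constructor
  · rintro ⟨C, hC⟩
    have hC0 : 0 ≤ C := le_trans (by positivity) (hC l le_rfl)
    have key : ∀ n : ℕ, ‖(1 - P l) *ᵥ ξ‖ ≤ K * C * γ ^ l * α ^ n := by
      intro n
      set k : ℤ := l + n with hk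
      have hlk : l ≤ k := by simp [hk]
      have hmm : evol A l k * evol A k l = 1 := by rw [evol_mul, evol_self]
      have hiv : evol A l k * (1 - P k) * evol A k l = 1 - P l := by
        have := invariant_evol ⟨hPinv.1, hPinv.2⟩ k l
        have h2 : (1 - P k) * evol A k l = evol A k l * (1 - P l) := by
          rw [sub_mul, mul_sub, one_mul, mul_one, this]
        rw [mul_assoc, h2, ← mul_assoc, hmm, one_mul]
      have hveq : (1 - P l) *ᵥ ξ = (evol A l k * (1 - P k)) *ᵥ (evol A k l *ᵥ ξ) := by
        rw [Matrix.mulVec_mulVec, hiv]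
      rw [hveq]
      have h1 : ‖evol A l k * (1 - P k)‖ ≤ K * α ^ (k - l) * γ ^ (l - k) :=
        norm_evol_Q hγ ⟨hPinv, hK, hα0, hα1, le_rfl, hfwd, hbwd⟩ hlk
      have h2 : ‖evol A k l *ᵥ ξ‖ ≤ C * γ ^ k := by
        have := hC k hlk
        rw [_root_.one_zpow, mul_one] at this
        calc ‖evol A k l *ᵥ ξ‖ = ‖evol A k l *ᵥ ξ‖ * γ ^ (-k) * γ ^ k := by
              rw [mul_assoc, ← zpow_add₀ hγ.ne']; simp
          _ ≤ C * γ ^ k := by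
              exact mul_le_mul_of_nonneg_right this (zpow_pos hγ _).le
      calc ‖(evol A l k * (1 - P k)) *ᵥ (evol A k l *ᵥ ξ)‖
          ≤ ‖evol A l k * (1 - P k)‖ * ‖evol A k l *ᵥ ξ‖ := Matrix.linfty_opNorm_mulVec _ _
        _ ≤ (K * α ^ (k - l) * γ ^ (l - k)) * (C * γ ^ k) := by
            apply mul_le_mul h1 h2 (norm_nonneg _)
            positivity
        _ = K * C * γ ^ l * α ^ (k - l) := by
            have hz : γ ^ (l - k) * γ ^ k = γ ^ l := by
              rw [← zpow_add₀ hγ.ne']; congr 1; ring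
            calc (K * α ^ (k-l) * γ ^ (l-k)) * (C * γ ^ k)
                = K * C * (γ ^ (l-k) * γ ^ k) * α ^ (k-l) := by ring
              _ = K * C * γ ^ l * α ^ (k-l) := by rw [hz]
        _ = K * C * γ ^ l * α ^ n := by rw [hk]; norm_num
    have h0 : ‖(1 - P l) *ᵥ ξ‖ ≤ 0 := le_zero_of_le_geom hα0.le hα1 key
    have h00 : (1 - P l) *ᵥ ξ = 0 := norm_le_zero_iff.mp h0
    have := h00
    rw [Matrix.sub_mulVec, Matrix.one_mulVec, sub_eq_zero] at this
    exact this.symm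
  · intro hfix
    refine ⟨K * γ ^ (-l) * ‖ξ‖, fun k hk => ?_⟩
    rw [_root_.one_zpow, mul_one]
    have h1 : ‖evol A k l *ᵥ ξ‖ ≤ K * α ^ (k-l) * γ ^ (k-l) * ‖ξ‖ := by
      calc ‖evol A k l *ᵥ ξ‖ = ‖(evol A k l * P l) *ᵥ ξ‖ := by
            rw [← Matrix.mulVec_mulVec, hfix]
        _ ≤ ‖evol A k l * P l‖ * ‖ξ‖ := Matrix.linfty_opNorm_mulVec _ _
        _ ≤ K * α ^ (k-l) * γ ^ (k-l) * ‖ξ‖ := by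
            apply mul_le_mul_of_nonneg_right _ (norm_nonneg _)
            exact norm_evol_P hγ ⟨hPinv, hK, hα0, hα1, le_rfl, hfwd, hbwd⟩ hk
    calc ‖evol A k l *ᵥ ξ‖ * γ ^ (-k)
        ≤ (K * α ^ (k-l) * γ ^ (k-l) * ‖ξ‖) * γ ^ (-k) := by
          exact mul_le_mul_of_nonneg_right h1 (zpow_pos hγ _).le
      _ = K * γ ^ (-l) * ‖ξ‖ * α ^ (k-l) := by
          have hz : γ ^ (k - l) * γ ^ (-k) = γ ^ (-l) := by
            rw [← zpow_add₀ hγ.ne']; congr 1; ring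
          calc (K * α ^ (k-l) * γ ^ (k-l) * ‖ξ‖) * γ ^ (-k)
              = K * ‖ξ‖ * (γ ^ (k-l) * γ ^ (-k)) * α ^ (k-l) := by ring
            _ = K * γ ^ (-l) * ‖ξ‖ * α ^ (k-l) := by rw [hz]; ring
      _ ≤ K * γ ^ (-l) * ‖ξ‖ * 1 := by
          apply mul_le_mul_of_nonneg_left (zpow_le_one_base hα0.le hα1.le (by omega))
          positivity
      _ = K * γ ^ (-l) * ‖ξ‖ := mul_one _

lemma unstable_eq_ker {N : ℕ} {A : ℤ → GL (Fin N) ℝ} {γ : ℝ} {P : ℤ → Mat N} {K α : ℝ}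
    (hγ : 0 < γ) (hN : NEDWith A γ P K α 1) (l : ℤ) :
    unstableSet A γ 1 l = ↑(LinearMap.ker (P l).mulVecLin) := by
  obtain ⟨hPinv, hK, hα0, hα1, -, hfwd, hbwd⟩ := hN
  have hN' : NEDWith A γ P K α 1 := ⟨hPinv, hK, hα0, hα1, le_rfl, hfwd, hbwd⟩
  ext ξ
  rw [SetLike.mem_coe, LinearMap.mem_ker, Matrix.mulVecLin_apply]
  constructor
  · rintro ⟨C, hC⟩
    have hC0 : 0 ≤ C := le_trans (by positivity) (hC l le_rfl)
    have key : ∀ n : ℕ, ‖P l *ᵥ ξ‖ ≤ K * C * γ ^ l * α ^ n := by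
      intro n
      set k : ℤ := l - n with hk
      have hlk : k ≤ l := by simp [hk]
      have hmm : evol A l k * evol A k l = 1 := by rw [evol_mul, evol_self]
      have hiv : evol A l k * P k * evol A k l = P l := by
        have h2 := invariant_evol hPinv k l
        rw [mul_assoc, h2, ← mul_assoc, hmm, one_mul]
      have hveq : P l *ᵥ ξ = (evol A l k * P k) *ᵥ (evol A k l *ᵥ ξ) := by
        rw [Matrix.mulVec_mulVec, hiv]
      rw [hveq]
      have h1 : ‖evol A l k * P k‖ ≤ K * α ^ (l - k) * γ ^ (l - k) :=
        norm_evol_P hγ hN' hlk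
      have h2 : ‖evol A k l *ᵥ ξ‖ ≤ C * γ ^ k := by
        have := hC k hlk
        rw [_root_.one_zpow, mul_one] at this
        calc ‖evol A k l *ᵥ ξ‖ = ‖evol A k l *ᵥ ξ‖ * γ ^ (-k) * γ ^ k := by
              rw [mul_assoc, ← zpow_add₀ hγ.ne']; simp
          _ ≤ C * γ ^ k := mul_le_mul_of_nonneg_right this (zpow_pos hγ _).le
      calc ‖(evol A l k * P k) *ᵥ (evol A k l *ᵥ ξ)‖
          ≤ ‖evol A l k * P k‖ * ‖evol A k l *ᵥ ξ‖ := Matrix.linfty_opNorm_mulVec _ _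
        _ ≤ (K * α ^ (l - k) * γ ^ (l - k)) * (C * γ ^ k) := by
            apply mul_le_mul h1 h2 (norm_nonneg _); positivity
        _ = K * C * γ ^ l * α ^ (l - k) := by
            have hz : γ ^ (l - k) * γ ^ k = γ ^ l := by
              rw [← zpow_add₀ hγ.ne']; congr 1; ring
            calc (K * α ^ (l-k) * γ ^ (l-k)) * (C * γ ^ k)
                = K * C * (γ ^ (l-k) * γ ^ k) * α ^ (l-k) := by ring
              _ = K * C * γ ^ l * α ^ (l-k) := by rw [hz]
        _ = K * C * γ ^ l * α ^ n := by rw [hk]; norm_num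
    have h0 : ‖P l *ᵥ ξ‖ ≤ 0 := le_zero_of_le_geom hα0.le hα1 key
    exact norm_le_zero_iff.mp h0
  · intro hfix
    have hfix' : (1 - P l) *ᵥ ξ = ξ := by
      rw [Matrix.sub_mulVec, Matrix.one_mulVec, hfix, sub_zero]
    refine ⟨K * γ ^ (-l) * ‖ξ‖, fun k hk => ?_⟩
    rw [_root_.one_zpow, mul_one]
    have h1 : ‖evol A k l *ᵥ ξ‖ ≤ K * α ^ (l-k) * γ ^ (k-l) * ‖ξ‖ := by
      calc ‖evol A k l *ᵥ ξ‖ = ‖(evol A k l * (1 - P l)) *ᵥ ξ‖ := by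
            rw [← Matrix.mulVec_mulVec, hfix']
        _ ≤ ‖evol A k l * (1 - P l)‖ * ‖ξ‖ := Matrix.linfty_opNorm_mulVec _ _
        _ ≤ K * α ^ (l-k) * γ ^ (k-l) * ‖ξ‖ :=
            mul_le_mul_of_nonneg_right (norm_evol_Q hγ hN' hk) (norm_nonneg _)
    calc ‖evol A k l *ᵥ ξ‖ * γ ^ (-k)
        ≤ (K * α ^ (l-k) * γ ^ (k-l) * ‖ξ‖) * γ ^ (-k) :=
          mul_le_mul_of_nonneg_right h1 (zpow_pos hγ _).le
      _ = K * γ ^ (-l) * ‖ξ‖ * α ^ (l-k) := by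
          have hz : γ ^ (k - l) * γ ^ (-k) = γ ^ (-l) := by
            rw [← zpow_add₀ hγ.ne']; congr 1; ring
          calc (K * α ^ (l-k) * γ ^ (k-l) * ‖ξ‖) * γ ^ (-k)
              = K * ‖ξ‖ * (γ ^ (k-l) * γ ^ (-k)) * α ^ (l-k) := by ring
            _ = K * γ ^ (-l) * ‖ξ‖ * α ^ (l-k) := by rw [hz]; ring
      _ ≤ K * γ ^ (-l) * ‖ξ‖ * 1 := by
          apply mul_le_mul_of_nonneg_left (zpow_le_one_base hα0.le hα1.le (by omega))
          positivity
      _ = K * γ ^ (-l) * ‖ξ‖ := mul_one _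

lemma evolW_self {N : ℕ} (A : ℤ → GL (Fin N) ℝ) (γ : ℝ) (l : ℤ) : evolW A γ l l = 1 := by
  simp [evolW, evol_self]

lemma eps_eq_one {N : ℕ} (hN1 : 0 < N) {A : ℤ → GL (Fin N) ℝ} {γ : ℝ} {P : ℤ → Mat N}
    {K α ε : ℝ} (hN : NEDWith A γ P K α ε) : ε = 1 := by
  obtain ⟨hPinv, hK, hα0, hα1, hε, hfwd, hbwd⟩ := hN
  by_contra hne
  have hε1 : 1 < ε := lt_of_le_of_ne hε (Ne.symm hne)
  obtain ⟨n, hn⟩ := pow_unbounded_of_one_lt (2 * K) hε1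
  haveI : NeZero N := ⟨hN1.ne'⟩
  set l : ℤ := -(n : ℤ) with hl
  have h1 : ‖P l‖ ≤ K * ε ^ l := by
    have := hfwd l l le_rfl
    rw [evolW_self, one_mul, sub_self] at this
    simpa using this
  have h2 : ‖(1 : Mat N) - P l‖ ≤ K * ε ^ l := by
    have := hbwd l l le_rfl
    rw [evolW_self, one_mul, sub_self] at this
    simpa using this
  have hKpos : 0 < K := lt_of_lt_of_le one_pos hK
  have hεl : ε ^ l = (ε ^ n)⁻¹ := by
    rw [hl, _root_.zpow_neg, zpow_natCast]
  have hone : (1 : ℝ) ≤ 2 * (K * ε ^ l) := by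
    have : ‖(1 : Mat N)‖ ≤ ‖P l‖ + ‖(1 : Mat N) - P l‖ := by
      calc ‖(1 : Mat N)‖ = ‖P l + ((1 : Mat N) - P l)‖ := by congr 1; abel
        _ ≤ _ := norm_add_le _ _
    rw [norm_one] at this
    nlinarith [this, h1, h2]
  rw [hεl] at hone
  have hεn : 0 < ε ^ n := by positivity
  have h3 : ε ^ n ≤ 2 * K := by
    have := mul_le_mul_of_nonneg_right hone hεn.le
    rw [one_mul, mul_assoc, mul_assoc, inv_mul_cancel₀ hεn.ne', mul_one] at this
    exact this
  linarith
lemma eps_eq_one' {N : ℕ} (hN1 : 0 < N) {A : ℤ → GL (Fin N) ℝ} {γ : ℝ} {P : ℤ → Mat N}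
    {K α ε : ℝ} (hN : NEDWith A γ P K α ε) : NEDWith A γ P K α 1 := by
  have := eps_eq_one hN1 hN; rwa [this] at hN

noncomputable def evolEquiv {N : ℕ} (A : ℤ → GL (Fin N) ℝ) (k l : ℤ) :
    (Fin N → ℝ) ≃ₗ[ℝ] (Fin N → ℝ) :=
  LinearEquiv.ofLinear (evol A k l).mulVecLin (evol A l k).mulVecLin
    (by rw [← Matrix.mulVecLin_mul, evol_mul, evol_self, Matrix.mulVecLin_one])
    (by rw [← Matrix.mulVecLin_mul, evol_mul, evol_self, Matrix.mulVecLin_one])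

lemma range_P_map {N : ℕ} {A : ℤ → GL (Fin N) ℝ} {P : ℤ → Mat N}
    (hP : IsInvariantProjector A P) (k l : ℤ) :
    LinearMap.range (P k).mulVecLin
      = (LinearMap.range (P l).mulVecLin).map (evolEquiv A k l : (Fin N → ℝ) →ₗ[ℝ] (Fin N → ℝ)) := by
  ext x
  rw [Submodule.mem_map_equiv, mem_range_iff_fix (hP.1 k), mem_range_iff_fix (hP.1 l)]
  have hsymm : (evolEquiv A k l).symm x = evol A l k *ᵥ x := rfl
  rw [hsymm]
  constructor
  · intro h
    rw [Matrix.mulVec_mulVec, invariant_evol hP l k, ← Matrix.mulVec_mulVec, h]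
  · intro h
    have := congrArg (fun y => evol A k l *ᵥ y) h
    simp only [Matrix.mulVec_mulVec] at this
    rw [invariant_evol hP l k, ← mul_assoc, evol_mul, evol_self] at this
    simpa using this

lemma finrank_range_P_const {N : ℕ} {A : ℤ → GL (Fin N) ℝ} {P : ℤ → Mat N}
    (hP : IsInvariantProjector A P) (k l : ℤ) :
    Module.finrank ℝ (LinearMap.range (P k).mulVecLin)
      = Module.finrank ℝ (LinearMap.range (P l).mulVecLin) := by
  rw [range_P_map hP k l]
  exact LinearEquiv.finrank_map_eq _ _

lemma finrank_pos_iff_ne_bot {N : ℕ} (p : Submodule ℝ (Fin N → ℝ)) :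
    0 < Module.finrank ℝ p ↔ p ≠ ⊥ := by
  constructor
  · intro h hb; rw [hb] at h; simp at h
  · intro h
    rw [Module.finrank_pos_iff]
    exact Submodule.nontrivial_iff_ne_bot.mpr h

lemma finrank_range_ker {N : ℕ} (p : Mat N) :
    Module.finrank ℝ (LinearMap.range p.mulVecLin) + Module.finrank ℝ (LinearMap.ker p.mulVecLin) = N := by
  rw [LinearMap.finrank_range_add_finrank_ker]
  exact Module.finrank_fin_fun ℝ

lemma matrix_ext_mulVec {n : ℕ} {p q : Matrix (Fin n) (Fin n) ℝ}
    (h : ∀ x, p.mulVec x = q.mulVec x) : p = q := by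
  ext i j
  have := congrFun (h (Pi.single j 1)) i
  simpa [Matrix.mulVec_single] using this

lemma zpow_anti_base_le_one {r : ℝ} (h0 : 0 < r) (h1 : r ≤ 1) {m n : ℤ} (h : m ≤ n) :
    r ^ n ≤ r ^ m := by
  have : r ^ n = r ^ m * r ^ (n - m) := by
    rw [← zpow_add₀ h0.ne']; congr 1; ring
  rw [this]
  calc r ^ m * r ^ (n - m) ≤ r ^ m * 1 := by
        apply mul_le_mul_of_nonneg_left (zpow_le_one_base h0.le h1 (by omega))
        exact (zpow_pos h0 m).le
    _ = r ^ m := mul_one _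

lemma zpow_mono_base_one_le {r : ℝ} (h0 : 0 < r) (h1 : 1 ≤ r) {m n : ℤ} (h : m ≤ n) :
    r ^ m ≤ r ^ n := by
  have : r ^ n = r ^ m * r ^ (n - m) := by
    rw [← zpow_add₀ h0.ne']; congr 1; ring
  rw [this]
  calc r ^ m = r ^ m * 1 := (mul_one _).symm
    _ ≤ r ^ m * r ^ (n - m) := by
        apply mul_le_mul_of_nonneg_left _ (zpow_pos h0 m).le
        have := zpow_le_zpow_base zero_le_one h1 (show (0:ℤ) ≤ n - m by omega)
        simpa using this

lemma stable_mono {N : ℕ} (A : ℤ → GL (Fin N) ℝ) {γ γ' : ℝ} (hγ : 0 < γ) (hle : γ ≤ γ')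
    (l : ℤ) : stableSet A γ 1 l ⊆ stableSet A γ' 1 l := by
  have hγ' : 0 < γ' := lt_of_lt_of_le hγ hle
  rintro ξ ⟨C, hC⟩
  have hC0 : 0 ≤ C := le_trans (by positivity) (hC l le_rfl)
  refine ⟨C * (γ / γ') ^ l, fun k hk => ?_⟩
  have h1 := hC k hk
  rw [_root_.one_zpow, mul_one] at h1 ⊢
  have hr : (0:ℝ) < γ / γ' := by positivity
  have hr1 : γ / γ' ≤ 1 := by rw [div_le_one hγ']; exact hle
  have key : ‖evol A k l *ᵥ ξ‖ * γ' ^ (-k) = (‖evol A k l *ᵥ ξ‖ * γ ^ (-k)) * (γ / γ') ^ k := by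
    have hkk : (γ / γ') ^ k = γ ^ k * γ' ^ (-k) := by
      rw [div_zpow, _root_.zpow_neg, div_eq_mul_inv]
    rw [hkk, show (‖evol A k l *ᵥ ξ‖ * γ ^ (-k)) * (γ ^ k * γ' ^ (-k))
        = ‖evol A k l *ᵥ ξ‖ * (γ ^ (-k) * γ ^ k) * γ' ^ (-k) by ring,
      ← zpow_add₀ hγ.ne']
    simp
  rw [key]
  exact mul_le_mul h1 (zpow_anti_base_le_one hr hr1 hk) (zpow_pos hr _).le hC0

lemma unstable_anti {N : ℕ} (A : ℤ → GL (Fin N) ℝ) {γ γ' : ℝ} (hγ : 0 < γ) (hle : γ ≤ γ')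
    (l : ℤ) : unstableSet A γ' 1 l ⊆ unstableSet A γ 1 l := by
  have hγ' : 0 < γ' := lt_of_lt_of_le hγ hle
  rintro ξ ⟨C, hC⟩
  have hC0 : 0 ≤ C := le_trans (by positivity) (hC l le_rfl)
  refine ⟨C * (γ' / γ) ^ l, fun k hk => ?_⟩
  have h1 := hC k hk
  rw [_root_.one_zpow, mul_one] at h1 ⊢
  have hr : (0:ℝ) < γ' / γ := by positivity
  have hr1 : 1 ≤ γ' / γ := by rw [le_div_iff₀ hγ, one_mul]; exact hle
  have key : ‖evol A k l *ᵥ ξ‖ * γ ^ (-k) = (‖evol A k l *ᵥ ξ‖ * γ' ^ (-k)) * (γ' / γ) ^ k := by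
    have hkk : (γ' / γ) ^ k = γ' ^ k * γ ^ (-k) := by
      rw [div_zpow, _root_.zpow_neg, div_eq_mul_inv]
    rw [hkk, show (‖evol A k l *ᵥ ξ‖ * γ' ^ (-k)) * (γ' ^ k * γ ^ (-k))
        = ‖evol A k l *ᵥ ξ‖ * (γ' ^ (-k) * γ' ^ k) * γ ^ (-k) by ring,
      ← zpow_add₀ hγ'.ne']
    simp
  rw [key]
  exact mul_le_mul h1 (zpow_mono_base_one_le hr hr1 hk) (zpow_pos hr _).le hC0

lemma proj_decomp {N : ℕ} {p q : Mat N} (hp : p * p = p) (hq : q * q = q)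
    (hrange : LinearMap.range p.mulVecLin ≤ LinearMap.range q.mulVecLin) :
    Module.finrank ℝ (LinearMap.range q.mulVecLin)
      = Module.finrank ℝ (LinearMap.range p.mulVecLin)
        + Module.finrank ℝ (LinearMap.ker p.mulVecLin ⊓ LinearMap.range q.mulVecLin : Submodule ℝ (Fin N → ℝ)) := by
  set a := LinearMap.range p.mulVecLin
  set b := LinearMap.ker p.mulVecLin ⊓ LinearMap.range q.mulVecLin
  have hinf : a ⊓ b = ⊥ := by
    rw [eq_bot_iff]
    rintro x ⟨hxa, hxb, -⟩
    have h1 : p *ᵥ x = x := (mem_range_iff_fix hp x).mp hxa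
    have h2 : p *ᵥ x = 0 := hxb
    simp only [Set.mem_setOf_eq, SetLike.mem_coe, Submodule.mem_bot]
    rw [← h1, h2]
  have hsup : a ⊔ b = LinearMap.range q.mulVecLin := by
    apply le_antisymm
    · exact sup_le hrange inf_le_right
    · intro x hx
      have hdecomp : x = p *ᵥ x + (x - p *ᵥ x) := by ring
      have h1 : p *ᵥ x ∈ a := ⟨x, rfl⟩
      have h2 : x - p *ᵥ x ∈ b := by
        constructor
        · show p *ᵥ (x - p *ᵥ x) = 0
          rw [Matrix.mulVec_sub, Matrix.mulVec_mulVec, hp, sub_self]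
        · exact Submodule.sub_mem _ hx (hrange h1)
      rw [hdecomp]
      exact Submodule.add_mem _ (Submodule.mem_sup_left h1) (Submodule.mem_sup_right h2)
  have := Submodule.finrank_sup_add_finrank_inf_eq a b
  rw [hinf, hsup] at this
  simp only [finrank_bot, add_zero] at this
  omega

/-- Construction of a dichotomy for an intermediate weight, given dichotomies with the
same projector at two weights. -/
lemma ned_between {N : ℕ} {A : ℤ → GL (Fin N) ℝ} {P : ℤ → Mat N}
    {γa γb ζ Ka αa Kb αb : ℝ} (hγa : 0 < γa) (hγb : 0 < γb) (hζ : 0 < ζ)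
    (ha : NEDWith A γa P Ka αa 1) (hb : NEDWith A γb P Kb αb 1)
    (h1 : γa * αa < ζ) (h2 : ζ * αb < γb) :
    NEDWith A ζ P (max Ka Kb) (max (γa * αa / ζ) (ζ * αb / γb)) 1 := by
  obtain ⟨haP, haK, haα0, haα1, -, hafwd, habwd⟩ := ha
  obtain ⟨-, hbK, hbα0, hbα1, -, hbfwd, hbbwd⟩ := hb
  set α := max (γa * αa / ζ) (ζ * αb / γb) with hα
  have hα0 : 0 < α := lt_max_of_lt_left (by positivity)
  have hα1 : α < 1 := by
    apply max_lt
    · rw [div_lt_one hζ]; exact h1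
    · rw [div_lt_one hγb]; exact h2
  refine ⟨haP, le_trans haK (le_max_left _ _), hα0, hα1, le_rfl, ?_, ?_⟩
  · intro k l hkl
    rw [_root_.one_zpow, mul_one]
    have heq : evolW A ζ k l * P l = (γa / ζ) ^ (k - l) • (evolW A γa k l * P l) := by
      rw [evolW_weight_change A hγa.ne' hζ.ne', Matrix.smul_mul]
    rw [heq, norm_smul, Real.norm_eq_abs, abs_of_pos (zpow_pos (by positivity) _)]
    have hbase : (γa / ζ) ^ (k - l) * (Ka * αa ^ (k - l)) = Ka * (γa * αa / ζ) ^ (k - l) := by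
      rw [show γa * αa / ζ = (γa / ζ) * αa by ring, mul_zpow]
      ring
    calc (γa / ζ) ^ (k-l) * ‖evolW A γa k l * P l‖
        ≤ (γa / ζ) ^ (k-l) * (Ka * αa ^ (k-l)) := by
          apply mul_le_mul_of_nonneg_left _ (zpow_pos (by positivity) _).le
          have := hafwd k l hkl
          rwa [_root_.one_zpow, mul_one] at this
      _ = Ka * (γa * αa / ζ) ^ (k-l) := hbase
      _ ≤ max Ka Kb * α ^ (k-l) := by
          apply mul_le_mul (le_max_left _ _)
            (zpow_le_zpow_base (by positivity) (le_max_left _ _) (by omega))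
            (zpow_pos (by positivity) _).le
            (le_trans (le_trans one_pos.le hbK) (le_max_right _ _))
  · intro k l hkl
    rw [_root_.one_zpow, mul_one]
    have heq : evolW A ζ k l * (1 - P l) = (γb / ζ) ^ (k - l) • (evolW A γb k l * (1 - P l)) := by
      rw [evolW_weight_change A hγb.ne' hζ.ne', Matrix.smul_mul]
    rw [heq, norm_smul, Real.norm_eq_abs, abs_of_pos (zpow_pos (by positivity) _)]
    have hbase : (γb / ζ) ^ (k - l) * (Kb * (1/αb) ^ (k - l)) = Kb * (ζ * αb / γb) ^ (l - k) := by
      rw [show (l - k) = -(k - l) by ring, _root_.zpow_neg, ← _root_.inv_zpow,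
        show (ζ * αb / γb)⁻¹ = (γb / ζ) * (1/αb) by rw [inv_div, div_mul_div_comm, mul_one],
        mul_zpow]
      ring
    calc (γb / ζ) ^ (k-l) * ‖evolW A γb k l * (1 - P l)‖
        ≤ (γb / ζ) ^ (k-l) * (Kb * (1/αb) ^ (k-l)) := by
          apply mul_le_mul_of_nonneg_left _ (zpow_pos (by positivity) _).le
          have := hbbwd k l hkl
          rwa [_root_.one_zpow, mul_one] at this
      _ = Kb * (ζ * αb / γb) ^ (l-k) := hbase
      _ ≤ max Ka Kb * α ^ (l-k) := by
          apply mul_le_mul (le_max_right _ _)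
            (zpow_le_zpow_base (by positivity) (le_max_right _ _) (by omega))
            (zpow_pos (by positivity) _).le
            (le_trans (le_trans one_pos.le hbK) (le_max_right _ _))
      _ = max Ka Kb * (1 / α) ^ (k-l) := by
          rw [one_div, _root_.inv_zpow, ← _root_.zpow_neg, neg_sub]

lemma set_finrank_coe {N : ℕ} (p : Submodule ℝ (Fin N → ℝ)) :
    Set.finrank ℝ (↑p : Set (Fin N → ℝ)) = Module.finrank ℝ p := by
  rw [Set.finrank, Submodule.span_eq]

lemma coe_eq_singleton_zero_iff {N : ℕ} (p : Submodule ℝ (Fin N → ℝ)) :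
    (↑p : Set (Fin N → ℝ)) = {0} ↔ p = ⊥ := by
  constructor
  · intro h
    apply (Submodule.eq_bot_iff p).2
    intro x hx
    have : x ∈ (({0}) : Set (Fin N → ℝ)) := h ▸ hx
    simpa using this
  · intro h; rw [h]; exact Submodule.bot_coe

lemma d_const_of_no_spectrum {N : ℕ} (hN1 : 0 < N) (A : ℤ → GL (Fin N) ℝ) {γ₁ γ₂ : ℝ}
    (h0 : 0 < γ₁) (h12 : γ₁ < γ₂)
    (hss : ∀ ζ ∈ Set.Icc γ₁ γ₂, HasStrongNED A ζ) :
    Set.finrank ℝ (stableSet A γ₂ 1 0) = Set.finrank ℝ (stableSet A γ₁ 1 0) := by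
  set d : ℝ → ℕ := fun ζ => Set.finrank ℝ (stableSet A ζ 1 0) with hd
  show d γ₂ = d γ₁
  have hloc : ∀ ζ ∈ Set.Icc γ₁ γ₂, ∃ s : Set ℝ, IsOpen s ∧ ζ ∈ s ∧ ∀ ζ' ∈ s, d ζ' = d ζ := by
    intro ζ hζ
    have hζ0 : 0 < ζ := lt_of_lt_of_le h0 hζ.1
    obtain ⟨P, K, α, ε, hned, hstr⟩ := hss ζ hζ
    have hε := eps_eq_one hN1 hned
    rw [hε] at hned
    have hα0 : 0 < α := hned.2.2.1
    have hα1 : α < 1 := hned.2.2.2.1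
    refine ⟨Set.Ioo (ζ * α) (ζ / α), isOpen_Ioo, ⟨?_, ?_⟩, ?_⟩
    · exact mul_lt_of_lt_one_right hζ0 hα1
    · rw [lt_div_iff₀ hα0]; exact mul_lt_of_lt_one_right hζ0 hα1
    · intro ζ' hζ'
      have hζ'0 : 0 < ζ' := lt_trans (by positivity) hζ'.1
      have h' : NEDWith A ζ' P (max K K) (max (ζ * α / ζ') (ζ' * α / ζ)) 1 :=
        ned_between hζ0 hζ0 hζ'0 hned hned hζ'.1 ((lt_div_iff₀ hα0).mp hζ'.2)
      show Set.finrank ℝ (stableSet A ζ' 1 0) = Set.finrank ℝ (stableSet A ζ 1 0)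
      rw [stable_eq_range hζ'0 h' 0, stable_eq_range hζ0 hned 0]
  by_contra hne
  choose! s hopen hmem hconst using hloc
  set U : Set ℝ := ⋃ (ζ : ℝ) (_ : ζ ∈ Set.Icc γ₁ γ₂ ∧ d ζ = d γ₁), s ζ with hU
  set V : Set ℝ := ⋃ (ζ : ℝ) (_ : ζ ∈ Set.Icc γ₁ γ₂ ∧ d ζ ≠ d γ₁), s ζ with hV
  have hUopen : IsOpen U := isOpen_iUnion fun ζ => isOpen_iUnion fun h => hopen ζ h.1
  have hVopen : IsOpen V := isOpen_iUnion fun ζ => isOpen_iUnion fun h => hopen ζ h.1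
  have hsub : Set.Icc γ₁ γ₂ ⊆ U ∪ V := by
    intro x hx
    by_cases hdx : d x = d γ₁
    · exact Or.inl (Set.mem_iUnion.2 ⟨x, Set.mem_iUnion.2 ⟨⟨hx, hdx⟩, hmem x hx⟩⟩)
    · exact Or.inr (Set.mem_iUnion.2 ⟨x, Set.mem_iUnion.2 ⟨⟨hx, hdx⟩, hmem x hx⟩⟩)
  have hγ₁I : γ₁ ∈ Set.Icc γ₁ γ₂ := ⟨le_rfl, h12.le⟩
  have hγ₂I : γ₂ ∈ Set.Icc γ₁ γ₂ := ⟨h12.le, le_rfl⟩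
  have hUne : (Set.Icc γ₁ γ₂ ∩ U).Nonempty :=
    ⟨γ₁, hγ₁I, Set.mem_iUnion.2 ⟨γ₁, Set.mem_iUnion.2 ⟨⟨hγ₁I, rfl⟩, hmem γ₁ hγ₁I⟩⟩⟩
  have hVne : (Set.Icc γ₁ γ₂ ∩ V).Nonempty :=
    ⟨γ₂, hγ₂I, Set.mem_iUnion.2 ⟨γ₂, Set.mem_iUnion.2 ⟨⟨hγ₂I, hne⟩, hmem γ₂ hγ₂I⟩⟩⟩
  obtain ⟨z, hzI, hzU, hzV⟩ := isPreconnected_Icc U V hUopen hVopen hsub hUne hVne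
  obtain ⟨ζu, hu⟩ := Set.mem_iUnion.1 hzU
  obtain ⟨⟨hζuI, hζud⟩, hzu⟩ := Set.mem_iUnion.1 hu
  obtain ⟨ζv, hv⟩ := Set.mem_iUnion.1 hzV
  obtain ⟨⟨hζvI, hζvd⟩, hzv⟩ := Set.mem_iUnion.1 hv
  have h1 := hconst ζu hζuI z hzu
  have h2 := hconst ζv hζvI z hzv
  rw [h1, hζud] at h2
  exact hζvd h2.symm


/-- (Alternative II of the resolvent lemma.) For `γ₁ < γ₂` in the
resolvent set, with `F(l) = U_{γ₁}(l) ∩ S_{γ₂}(l)`, the statements (A') `F(l) ≠ {0}`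
for some `l`, (B') some `ζ ∈ (γ₁,γ₂)` belongs to the spectrum,
(C') `dim S_{γ₁}(l) < dim S_{γ₂}(l)` for all `l`, and (D') `dim U_{γ₁}(l) > dim U_{γ₂}(l)`
for all `l`, are pairwise equivalent. -/
theorem spectral_interval_tfae {N : ℕ} (A : ℤ → GL (Fin N) ℝ)
    (γ₁ γ₂ : ℝ) (h0 : 0 < γ₁) (h12 : γ₁ < γ₂)
    (P₁ P₂ : ℤ → Mat N) (K₁ α₁ ε₁ K₂ α₂ ε₂ : ℝ)
    (h1 : NEDWith A γ₁ P₁ K₁ α₁ ε₁) (h1s : α₁ * ε₁ ^ 2 < 1)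
    (h2 : NEDWith A γ₂ P₂ K₂ α₂ ε₂) (h2s : α₂ * ε₂ ^ 2 < 1) :
    List.TFAE [
      -- (A') the intersection bundle is nontrivial at some fiber
      (∃ l : ℤ, unstableSet A γ₁ ε₁ l ∩ stableSet A γ₂ ε₂ l ≠ {0}),
      -- (B') there is spectrum inside (γ₁,γ₂)
      (∃ ζ ∈ Set.Ioo γ₁ γ₂, ζ ∈ SigmaNED A),
      -- (C') the stable dimension strictly increases
      (∀ l : ℤ, Set.finrank ℝ (stableSet A γ₁ ε₁ l) <
        Set.finrank ℝ (stableSet A γ₂ ε₂ l)),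
      -- (D') the unstable dimension strictly decreases
      (∀ l : ℤ, Set.finrank ℝ (unstableSet A γ₂ ε₂ l) <
        Set.finrank ℝ (unstableSet A γ₁ ε₁ l))] := by
  rcases Nat.eq_zero_or_pos N with hN0 | hN1
  · subst hN0
    have hsub : ∀ x : Fin 0 → ℝ, x = 0 := fun x => Subsingleton.elim _ _
    have hA : ¬ (∃ l : ℤ, unstableSet A γ₁ ε₁ l ∩ stableSet A γ₂ ε₂ l ≠ {0}) := by
      rintro ⟨l, hl⟩
      apply hl
      ext x
      simp only [Set.mem_inter_iff, Set.mem_singleton_iff]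
      constructor
      · intro _; exact hsub x
      · rintro rfl
        constructor
        · exact ⟨0, fun k _ => by
            rw [show (evol A k l).mulVec 0 = 0 from Matrix.mulVec_zero _, norm_zero,
              zero_mul, zero_mul]⟩
        · exact ⟨0, fun k _ => by
            rw [show (evol A k l).mulVec 0 = 0 from Matrix.mulVec_zero _, norm_zero,
              zero_mul, zero_mul]⟩
    have hfr : ∀ s : Set (Fin 0 → ℝ), Set.finrank ℝ s = 0 := by
      intro s
      have hle : Set.finrank ℝ s ≤ Module.finrank ℝ (Fin 0 → ℝ) := Submodule.finrank_le _
      rw [Module.finrank_fin_fun] at hle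
      omega
    have hB : ¬ (∃ ζ ∈ Set.Ioo γ₁ γ₂, ζ ∈ SigmaNED A) := by
      rintro ⟨ζ, hζI, hζ0, hζS⟩
      apply hζS
      haveI : Subsingleton (Mat 0) := ⟨fun a b => by ext i j; exact i.elim0⟩
      refine ⟨fun _ => 0, 1, 1/2, 1,
        ⟨⟨fun k => by simp, fun k => by simp⟩, le_rfl,
          by norm_num, by norm_num, le_rfl, ?_, ?_⟩, by norm_num⟩
      · intro k l _
        rw [show evolW A ζ k l * 0 = 0 from mul_zero _, norm_zero]
        positivity
      · intro k l _
        rw [show evolW A ζ k l * (1 - 0) = 0 from Subsingleton.elim _ _, norm_zero]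
        positivity
    have hC : ¬ (∀ l : ℤ, Set.finrank ℝ (stableSet A γ₁ ε₁ l) <
        Set.finrank ℝ (stableSet A γ₂ ε₂ l)) := by
      intro h; have := h 0; rw [hfr, hfr] at this; omega
    have hD : ¬ (∀ l : ℤ, Set.finrank ℝ (unstableSet A γ₂ ε₂ l) <
        Set.finrank ℝ (unstableSet A γ₁ ε₁ l)) := by
      intro h; have := h 0; rw [hfr, hfr] at this; omega
    tfae_have 1 ↔ 2 := iff_of_false hA hB
    tfae_have 3 ↔ 2 := iff_of_false hC hB
    tfae_have 4 ↔ 2 := iff_of_false hD hB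
    tfae_finish
  · have hε₁ : ε₁ = 1 := eps_eq_one hN1 h1
    have hε₂ : ε₂ = 1 := eps_eq_one hN1 h2
    subst hε₁; subst hε₂
    have hγ₂ : 0 < γ₂ := h0.trans h12
    have hP1 := h1.1
    have hP2 := h2.1
    have hS1 : ∀ l, stableSet A γ₁ 1 l = ↑(LinearMap.range (P₁ l).mulVecLin) :=
      stable_eq_range h0 h1
    have hS2 : ∀ l, stableSet A γ₂ 1 l = ↑(LinearMap.range (P₂ l).mulVecLin) :=
      stable_eq_range hγ₂ h2
    have hUk1 : ∀ l, unstableSet A γ₁ 1 l = ↑(LinearMap.ker (P₁ l).mulVecLin) :=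
      unstable_eq_ker h0 h1
    have hUk2 : ∀ l, unstableSet A γ₂ 1 l = ↑(LinearMap.ker (P₂ l).mulVecLin) :=
      unstable_eq_ker hγ₂ h2
    obtain ⟨r₁, hr₁⟩ : ∃ r, ∀ l, Module.finrank ℝ (LinearMap.range (P₁ l).mulVecLin) = r :=
      ⟨_, fun l => finrank_range_P_const hP1 l 0⟩
    obtain ⟨r₂, hr₂⟩ : ∃ r, ∀ l, Module.finrank ℝ (LinearMap.range (P₂ l).mulVecLin) = r :=
      ⟨_, fun l => finrank_range_P_const hP2 l 0⟩
    have hrle : ∀ l, LinearMap.range (P₁ l).mulVecLin ≤ LinearMap.range (P₂ l).mulVecLin := by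
      intro l
      have hsub := stable_mono A h0 h12.le l
      rw [hS1 l, hS2 l] at hsub
      exact hsub
    have hkle : ∀ l, LinearMap.ker (P₂ l).mulVecLin ≤ LinearMap.ker (P₁ l).mulVecLin := by
      intro l
      have hsub := unstable_anti A h0 h12.le l
      rw [hUk1 l, hUk2 l] at hsub
      exact hsub
    have hr12 : r₁ ≤ r₂ := by
      have := Submodule.finrank_mono (hrle 0)
      rwa [hr₁ 0, hr₂ 0] at this
    have hdec : ∀ l, Module.finrank ℝ (LinearMap.range (P₂ l).mulVecLin)
        = Module.finrank ℝ (LinearMap.range (P₁ l).mulVecLin)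
          + Module.finrank ℝ (LinearMap.ker (P₁ l).mulVecLin ⊓ LinearMap.range (P₂ l).mulVecLin
              : Submodule ℝ (Fin N → ℝ)) :=
      fun l => proj_decomp (hP1.1 l) (hP2.1 l) (hrle l)
    have hrn1 : ∀ l, Module.finrank ℝ (LinearMap.range (P₁ l).mulVecLin)
        + Module.finrank ℝ (LinearMap.ker (P₁ l).mulVecLin) = N := fun l => finrank_range_ker _
    have hrn2 : ∀ l, Module.finrank ℝ (LinearMap.range (P₂ l).mulVecLin)
        + Module.finrank ℝ (LinearMap.ker (P₂ l).mulVecLin) = N := fun l => finrank_range_ker _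
    tfae_have 1 ↔ 3 := by
      constructor
      · rintro ⟨l, hl⟩ l'
        rw [hUk1 l, hS2 l, ← Submodule.coe_inf] at hl
        have hbot : LinearMap.ker (P₁ l).mulVecLin ⊓ LinearMap.range (P₂ l).mulVecLin ≠ ⊥ :=
          fun hb => hl ((coe_eq_singleton_zero_iff _).2 hb)
        have hpos := (finrank_pos_iff_ne_bot _).2 hbot
        have hd := hdec l
        rw [hS1 l', hS2 l', set_finrank_coe, set_finrank_coe, hr₁ l', hr₂ l']
        have e1 := hr₁ l
        have e2 := hr₂ l
        omega
      · intro h3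
        refine ⟨0, ?_⟩
        have h30 := h3 0
        rw [hS1 0, hS2 0, set_finrank_coe, set_finrank_coe, hr₁ 0, hr₂ 0] at h30
        rw [hUk1 0, hS2 0, ← Submodule.coe_inf]
        intro hb
        have hbot := (coe_eq_singleton_zero_iff _).1 hb
        have hd := hdec 0
        rw [hbot] at hd
        simp only [finrank_bot, add_zero] at hd
        have e1 := hr₁ 0
        have e2 := hr₂ 0
        omega
    tfae_have 3 ↔ 4 := by
      have h3iff : (∀ l : ℤ, Set.finrank ℝ (stableSet A γ₁ 1 l) <
          Set.finrank ℝ (stableSet A γ₂ 1 l)) ↔ r₁ < r₂ := by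
        constructor
        · intro h
          have := h 0
          rwa [hS1 0, hS2 0, set_finrank_coe, set_finrank_coe, hr₁ 0, hr₂ 0] at this
        · intro h l
          rw [hS1 l, hS2 l, set_finrank_coe, set_finrank_coe, hr₁ l, hr₂ l]
          exact h
      have h4iff : (∀ l : ℤ, Set.finrank ℝ (unstableSet A γ₂ 1 l) <
          Set.finrank ℝ (unstableSet A γ₁ 1 l)) ↔ r₁ < r₂ := by
        constructor
        · intro h
          have h0' := h 0
          rw [hUk1 0, hUk2 0, set_finrank_coe, set_finrank_coe] at h0'
          have e1 := hrn1 0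
          have e2 := hrn2 0
          have e3 := hr₁ 0
          have e4 := hr₂ 0
          omega
        · intro h l
          rw [hUk1 l, hUk2 l, set_finrank_coe, set_finrank_coe]
          have e1 := hrn1 l
          have e2 := hrn2 l
          have e3 := hr₁ l
          have e4 := hr₂ l
          omega
      rw [h3iff, h4iff]
    tfae_have 2 → 3 := by
      intro hspec
      by_contra h3
      push_neg at h3
      obtain ⟨l₀, hl₀⟩ := h3
      rw [hS1 l₀, hS2 l₀, set_finrank_coe, set_finrank_coe, hr₁ l₀, hr₂ l₀] at hl₀
      have hreq : ∀ l, LinearMap.range (P₁ l).mulVecLin = LinearMap.range (P₂ l).mulVecLin := by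
        intro l
        apply Submodule.eq_of_le_of_finrank_le (hrle l)
        rw [hr₁ l, hr₂ l]
        omega
      have hkeq : ∀ l, LinearMap.ker (P₂ l).mulVecLin = LinearMap.ker (P₁ l).mulVecLin := by
        intro l
        apply Submodule.eq_of_le_of_finrank_le (hkle l)
        have e1 := hrn1 l
        have e2 := hrn2 l
        have e3 := hr₁ l
        have e4 := hr₂ l
        omega
      have hPeq : P₁ = P₂ := by
        funext l
        apply matrix_ext_mulVec
        intro x
        have hmem1 : P₁ l *ᵥ x ∈ LinearMap.range (P₁ l).mulVecLin := ⟨x, rfl⟩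
        have hfix : P₂ l *ᵥ (P₁ l *ᵥ x) = P₁ l *ᵥ x :=
          (mem_range_iff_fix (hP2.1 l) _).mp (hreq l ▸ hmem1)
        have hker0 : P₁ l *ᵥ (x - P₁ l *ᵥ x) = 0 := by
          rw [Matrix.mulVec_sub, Matrix.mulVec_mulVec, hP1.1 l, sub_self]
        have hker : P₂ l *ᵥ (x - P₁ l *ᵥ x) = 0 := by
          have hmem : x - P₁ l *ᵥ x ∈ LinearMap.ker (P₁ l).mulVecLin := hker0
          rw [← hkeq l] at hmem
          exact hmem
        calc P₁ l *ᵥ x = P₂ l *ᵥ (P₁ l *ᵥ x) + P₂ l *ᵥ (x - P₁ l *ᵥ x) := by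
              rw [hfix, hker, add_zero]
          _ = P₂ l *ᵥ (P₁ l *ᵥ x + (x - P₁ l *ᵥ x)) := (Matrix.mulVec_add _ _ _).symm
          _ = P₂ l *ᵥ x := by rw [show P₁ l *ᵥ x + (x - P₁ l *ᵥ x) = x by abel]
      obtain ⟨ζ, hζI, hzS⟩ := hspec
      have hζ0 : 0 < ζ := h0.trans hζI.1
      have h2' : NEDWith A γ₂ P₁ K₂ α₂ 1 := by rw [hPeq]; exact h2
      have hcc1 : γ₁ * α₁ < ζ :=
        lt_trans (mul_lt_of_lt_one_right h0 h1.2.2.2.1) hζI.1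
      have hcc2 : ζ * α₂ < γ₂ :=
        lt_trans (mul_lt_of_lt_one_right hζ0 h2.2.2.2.1) hζI.2
      have hned := ned_between h0 hγ₂ hζ0 h1 h2' hcc1 hcc2
      exact absurd ⟨_, _, _, 1, hned, by rw [one_pow, mul_one]; exact hned.2.2.2.1⟩ hzS.2
    tfae_have 3 → 2 := by
      intro h3
      by_contra hB
      have hss : ∀ ζ ∈ Set.Icc γ₁ γ₂, HasStrongNED A ζ := by
        intro ζ hζ
        rcases eq_or_lt_of_le hζ.1 with he | hlt
        · exact he ▸ ⟨P₁, K₁, α₁, 1, h1, h1s⟩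
        rcases eq_or_lt_of_le hζ.2 with he | hlt2
        · exact he.symm ▸ ⟨P₂, K₂, α₂, 1, h2, h2s⟩
        have hζ0 : 0 < ζ := h0.trans hlt
        by_contra hS
        exact hB ⟨ζ, ⟨hlt, hlt2⟩, hζ0, hS⟩
      have hconst := d_const_of_no_spectrum hN1 A h0 h12 hss
      have h30 := h3 0
      omega
    tfae_finish
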